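/- Let n ≥ 2, let K₀ be a convex body in ℝⁿ, and let A, B be centrally symmetric convex bodies in ℝⁿ. If for every linear map L : ℝⁿ → ℝⁿ and every (n−1)-dimensional linear subspace E of ℝⁿ one has vol_{n-1}(E ∩ (A + L(K₀))) ≤ vol_{n-1}(E ∩ (B + L(K₀))), then A ⊆ B. -/

import Mathlib

open MeasureTheory Pointwise Metric Filter Topology
open scoped RealInnerProductSpace ENNReal NNReal

section Aux

theorem aux_limit_contra (k : ℕ) (α h₁ c₀ : ℝ)
    (hineq : ∀ t : ℝ, 1 ≤ t → α * t^k ≤ h₁ * (t+c₀)^k) : α ≤ h₁ := by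
  have hev : ∀ᶠ t : ℝ in atTop, α ≤ h₁ * (1 + c₀/t)^k := by
    filter_upwards [eventually_ge_atTop (1:ℝ)] with t ht
    have ht0 : 0 < t := lt_of_lt_of_le one_pos ht
    have h2 := hineq t ht
    have h3 : (t + c₀)^k = t^k * (1 + c₀/t)^k := by
      rw [← mul_pow]; congr 1; field_simp
    rw [h3] at h2
    nlinarith [pow_pos ht0 k]
  have hlim : Tendsto (fun t : ℝ => h₁ * (1 + c₀/t)^k) atTop (𝓝 (h₁ * (1 + 0)^k)) := by
    apply Tendsto.const_mul
    apply Tendsto.pow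
    exact tendsto_const_nhds.add (tendsto_const_nhds.div_atTop tendsto_id)
  have := ge_of_tendsto hlim hev
  simpa using this

theorem aux_symm_scale {n : ℕ} (A : Set (EuclideanSpace ℝ (Fin n))) (hA₂ : Convex ℝ A)
    (hAsymm : A = -A) (a : EuclideanSpace ℝ (Fin n)) (ha : a ∈ A) (r : ℝ) (hr : |r| ≤ 1) :
    r • a ∈ A := by
  have hna : -a ∈ A := by rw [hAsymm]; simpa using ha
  have h1 : (0:ℝ) ≤ (1+r)/2 := by rw [abs_le] at hr; linarith
  have h2 : (0:ℝ) ≤ (1-r)/2 := by rw [abs_le] at hr; linarith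
  have h3 : (1+r)/2 + (1-r)/2 = (1:ℝ) := by ring
  have h4 := hA₂ ha hna h1 h2 h3
  have heq : ((1+r)/2) • a + ((1-r)/2) • (-a) = r • a := by
    rw [smul_neg, ← sub_eq_add_neg, ← sub_smul]; congr 1; ring
  rwa [heq] at h4

variable {n : ℕ}

theorem aux_compact_preimage (E : Submodule ℝ (EuclideanSpace ℝ (Fin n)))
    (S : Set (EuclideanSpace ℝ (Fin n))) (hS : IsCompact S) :
    IsCompact ((↑) ⁻¹' S : Set ↥E) := by
  have hcl : IsClosed ((↑) ⁻¹' S : Set ↥E) := hS.isClosed.preimage continuous_subtype_val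
  have hbd : Bornology.IsBounded ((↑) ⁻¹' S : Set ↥E) := by
    obtain ⟨r, hr⟩ := hS.isBounded.subset_closedBall 0
    apply Bornology.IsBounded.subset (Metric.isBounded_closedBall (x := (0:↥E)) (r := r))
    intro x hx
    have := hr hx
    simp only [Metric.mem_closedBall, dist_zero_right] at this ⊢
    exact this
  exact Metric.isCompact_of_isClosed_isBounded hcl hbd

theorem aux_preimage_add_split (E : Submodule ℝ (EuclideanSpace ℝ (Fin n)))
    (C S : Set (EuclideanSpace ℝ (Fin n))) (hS : S ⊆ (E : Set (EuclideanSpace ℝ (Fin n)))) :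
    ((↑) ⁻¹' (C + S) : Set ↥E) = (↑) ⁻¹' C + (↑) ⁻¹' S := by
  ext x
  simp only [Set.mem_preimage, Set.mem_add]
  constructor
  · rintro ⟨c, hc, s, hs, hcs⟩
    have hsE : s ∈ E := hS hs
    have hcE : c ∈ E := by
      have hcd : c = (x : EuclideanSpace ℝ (Fin n)) - s := by rw [← hcs]; abel
      rw [hcd]; exact E.sub_mem x.2 hsE
    exact ⟨⟨c, hcE⟩, hc, ⟨s, hsE⟩, hs, by ext; simp [← hcs]⟩
  · rintro ⟨c, hc, s, hs, hcs⟩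
    exact ⟨c, hc, s, hs, by rw [← hcs]; rfl⟩

theorem aux_preimage_smul_split (E : Submodule ℝ (EuclideanSpace ℝ (Fin n)))
    (S : Set (EuclideanSpace ℝ (Fin n))) (t : ℝ) (ht : t ≠ 0) :
    ((↑) ⁻¹' (t • S) : Set ↥E) = t • ((↑) ⁻¹' S : Set ↥E) := by
  ext x
  simp only [Set.mem_preimage, Set.mem_smul_set]
  constructor
  · rintro ⟨s, hs, hsx⟩
    have hsE : s ∈ E := by
      have hsd : s = t⁻¹ • (x : EuclideanSpace ℝ (Fin n)) := by
        rw [← hsx, smul_smul, inv_mul_cancel₀ ht, one_smul]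
      rw [hsd]; exact E.smul_mem _ x.2
    exact ⟨⟨s, hsE⟩, hs, by ext; simp [← hsx]⟩
  · rintro ⟨s, hs, hsx⟩
    exact ⟨s, hs, by rw [← hsx]; rfl⟩

theorem aux_proj_inner (E : Submodule ℝ (EuclideanSpace ℝ (Fin n)))
    (w x : EuclideanSpace ℝ (Fin n)) (hx : x ∈ E) :
    ⟪(E.orthogonalProjectionOnto w : EuclideanSpace ℝ (Fin n)), x⟫ = ⟪w, x⟫ := by
  have hmem : w - E.orthogonalProjectionOnto w ∈ Eᗮ :=
    Submodule.sub_starProjection_mem_orthogonal (K := E) w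
  have h2 := hmem x hx
  rw [inner_sub_right] at h2
  have h3 := real_inner_comm x ((E.orthogonalProjectionOnto w : EuclideanSpace ℝ (Fin n)))
  have h4 := real_inner_comm x w
  linarith

variable {k : ℕ}

noncomputable def PsiMap (E : Submodule ℝ (EuclideanSpace ℝ (Fin n)))
    (b : OrthonormalBasis (Fin (k+1)) ℝ ↥E) : ↥E ≃ᵐ ℝ × (Fin k → ℝ) :=
  (b.repr.toHomeomorph.toMeasurableEquiv.trans
    (MeasurableEquiv.toLp 2 (Fin (k+1) → ℝ)).symm).trans
    (MeasurableEquiv.piFinSuccAbove (fun _ => ℝ) 0)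

theorem PsiMap_mp (E : Submodule ℝ (EuclideanSpace ℝ (Fin n)))
    (b : OrthonormalBasis (Fin (k+1)) ℝ ↥E) :
    MeasurePreserving (PsiMap E b) volume volume := by
  have hfun : ⇑(PsiMap E b) = (MeasurableEquiv.piFinSuccAbove (fun _ => ℝ) 0) ∘
      (MeasurableEquiv.toLp 2 (Fin (k+1) → ℝ)).symm ∘ ⇑b.repr := rfl
  rw [hfun]
  exact (volume_preserving_piFinSuccAbove (fun _ => ℝ) 0).comp
    ((EuclideanSpace.volume_preserving_symm_measurableEquiv_toLp (Fin (k+1))).comp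
      b.measurePreserving_repr)

theorem PsiMap_fst (E : Submodule ℝ (EuclideanSpace ℝ (Fin n)))
    (b : OrthonormalBasis (Fin (k+1)) ℝ ↥E) (x : ↥E) :
    (PsiMap E b x).1 = ⟪b 0, x⟫ := by
  have h1 : (PsiMap E b x).1 = b.repr x 0 := rfl
  rw [h1, OrthonormalBasis.repr_apply_apply]

theorem PsiMap_snd (E : Submodule ℝ (EuclideanSpace ℝ (Fin n)))
    (b : OrthonormalBasis (Fin (k+1)) ℝ ↥E) (x : ↥E) (j : Fin k) :
    (PsiMap E b x).2 j = ⟪b j.succ, x⟫ := by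
  have h1 : (PsiMap E b x).2 j = b.repr x ((0 : Fin (k+1)).succAbove j) := rfl
  rw [h1, Fin.zero_succAbove, OrthonormalBasis.repr_apply_apply]

theorem aux_vol_T_lower (k : ℕ) (α : ℝ) (d : Fin k → ℝ) (Q : Set (Fin k → ℝ))
    (hQ : MeasurableSet Q) :
    ENNReal.ofReal (2*α) * volume Q ≤
      volume {p : ℝ × (Fin k → ℝ) | p.1 ∈ Set.Icc (-α) α ∧ p.2 - (p.1/α) • d ∈ Q} := by
  set T := {p : ℝ × (Fin k → ℝ) | p.1 ∈ Set.Icc (-α) α ∧ p.2 - (p.1/α) • d ∈ Q} with hTdef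
  have hf : Measurable (fun p : ℝ × (Fin k → ℝ) => (p.1, p.2 - (p.1/α) • d)) := by fun_prop
  have hT : MeasurableSet T := by
    have hTeq : T = (fun p : ℝ × (Fin k → ℝ) => (p.1, p.2 - (p.1/α) • d)) ⁻¹'
        ((Set.Icc (-α) α) ×ˢ Q) := by
      ext p; simp [hTdef]
    rw [hTeq]
    exact hf (measurableSet_Icc.prod hQ)
  rw [Measure.volume_eq_prod, Measure.prod_apply hT]
  have hpt : ∀ s : ℝ, (Set.Icc (-α) α).indicator (fun _ => volume Q) s ≤
      volume (Prod.mk s ⁻¹' T) := by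
    intro s
    rcases em (s ∈ Set.Icc (-α) α) with hs | hs
    · rw [Set.indicator_of_mem hs]
      have h5 : Prod.mk s ⁻¹' T = (fun y => y - (s/α) • d) ⁻¹' Q := by
        ext y
        simp only [hTdef, Set.mem_preimage, Set.mem_setOf_eq]
        exact ⟨fun hy => hy.2, fun hy => ⟨hs, hy⟩⟩
      rw [h5]
      have h6 : (fun y : Fin k → ℝ => y - (s/α) • d) = (fun y => y + -((s/α) • d)) := by
        funext y; rw [sub_eq_add_neg]
      rw [h6, measure_preimage_add_right]
    · rw [Set.indicator_of_notMem hs]; exact zero_le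
  calc ENNReal.ofReal (2*α) * volume Q
      = volume Q * volume (Set.Icc (-α) α) := by
        rw [Real.volume_Icc, mul_comm]
        congr 2
        ring
    _ = ∫⁻ s, (Set.Icc (-α) α).indicator (fun _ => volume Q) s := by
        rw [lintegral_indicator_const measurableSet_Icc]
    _ ≤ ∫⁻ s, volume (Prod.mk s ⁻¹' T) := lintegral_mono hpt

theorem aux_vol_prod_upper (k : ℕ) (h₁ : ℝ) (W : Set (Fin k → ℝ)) :
    volume ((Set.Icc (-h₁) h₁) ×ˢ W) = ENNReal.ofReal (2*h₁) * volume W := by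
  rw [Measure.volume_eq_prod, Measure.prod_prod, Real.volume_Icc]
  congr 2
  ring

theorem aux_vol_smul (k : ℕ) (s : Set (Fin k → ℝ)) (r : ℝ) (hr : 0 ≤ r) :
    volume (r • s) = ENNReal.ofReal (r ^ k) * volume s := by
  rw [Measure.addHaar_smul_of_nonneg volume hr s]
  congr 2
  simp [Module.finrank_pi]

end Aux

set_option maxHeartbeats 2000000 in
/-- **Corollary (symmetric bodies: sections of sums with linear images of a
fixed body).** If `A`, `B` are centrally symmetric convex bodies in `ℝⁿ`,
`n ≥ 2`, `K₀` a convex body, and for every linear map `L : ℝⁿ → ℝⁿ` and every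
`(n-1)`-dimensional subspace `E`, the `(n-1)`-volume of `E ∩ (A + L(K₀))` is
at most that of `E ∩ (B + L(K₀))`, then `A ⊆ B`. -/
theorem subset_of_section_sums_symmetric_linear_images (n : ℕ) (hn : 2 ≤ n)
    (K₀ A B : Set (EuclideanSpace ℝ (Fin n)))
    (hK₁ : IsCompact K₀) (hK₂ : Convex ℝ K₀) (hK₃ : (interior K₀).Nonempty)
    (hA₁ : IsCompact A) (hA₂ : Convex ℝ A) (hA₃ : (interior A).Nonempty)
    (hB₁ : IsCompact B) (hB₂ : Convex ℝ B) (hB₃ : (interior B).Nonempty)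
    (hAsymm : A = -A) (hBsymm : B = -B)
    (h : ∀ L : EuclideanSpace ℝ (Fin n) →ₗ[ℝ] EuclideanSpace ℝ (Fin n),
        ∀ E : Submodule ℝ (EuclideanSpace ℝ (Fin n)), Module.finrank ℝ E = n - 1 →
        volume ((↑) ⁻¹' (A + L '' K₀) : Set E) ≤
          volume ((↑) ⁻¹' (B + L '' K₀) : Set E)) :
    A ⊆ B := by
  intro a ha
  by_contra haB
  -- 0 ∈ B
  have hB0 : (0 : EuclideanSpace ℝ (Fin n)) ∈ B := by
    obtain ⟨b₀, hb₀⟩ := hB₃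
    have hb₀B : b₀ ∈ B := interior_subset hb₀
    have hnb₀ : -b₀ ∈ B := by rw [hBsymm]; simpa using hb₀B
    have h2 := hB₂ hb₀B hnb₀ (by norm_num : (0:ℝ) ≤ 1/2) (by norm_num : (0:ℝ) ≤ 1/2)
      (by norm_num : (1:ℝ)/2 + 1/2 = 1)
    simpa [smul_neg] using h2
  have ha0 : a ≠ 0 := fun h0 => haB (h0 ▸ hB0)
  -- separation
  obtain ⟨w, c, hwB, hwa⟩ : ∃ w : EuclideanSpace ℝ (Fin n), ∃ c : ℝ,
      (∀ x ∈ B, ⟪w, x⟫ < c) ∧ c < ⟪w, a⟫ := by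
    obtain ⟨f, c, h1, h2⟩ := geometric_hahn_banach_closed_point hB₂ hB₁.isClosed haB
    refine ⟨(InnerProductSpace.toDual ℝ (EuclideanSpace ℝ (Fin n))).symm f, c,
      fun x hx => ?_, ?_⟩
    · rw [InnerProductSpace.toDual_symm_apply]; exact h1 x hx
    · rw [InnerProductSpace.toDual_symm_apply]; exact h2
  have hc0 : 0 < c := by simpa using hwB 0 hB0
  have habs : ∀ x ∈ B, |⟪w, x⟫| ≤ c := by
    intro x hx
    have hnx : -x ∈ B := by rw [hBsymm]; simpa using hx
    have h1 := hwB x hx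
    have h2 := hwB (-x) hnx
    rw [inner_neg_right] at h2
    rw [abs_le]
    constructor <;> linarith
  -- hyperplane E containing a
  obtain ⟨z, hz0, hza⟩ : ∃ z : EuclideanSpace ℝ (Fin n), z ≠ 0 ∧ ⟪z, a⟫ = 0 := by
    have h1 : 0 < Module.finrank ℝ ↥((ℝ ∙ a)ᗮ) := by
      have h2 := Submodule.finrank_add_finrank_orthogonal (K := (ℝ ∙ a))
      rw [finrank_span_singleton ha0] at h2
      simp only [finrank_euclideanSpace_fin] at h2
      omega
    have h2 : (ℝ ∙ a)ᗮ ≠ ⊥ := by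
      intro hbot
      rw [hbot] at h1
      simp at h1
    obtain ⟨z, hz, hz0⟩ := Submodule.exists_mem_ne_zero_of_ne_bot h2
    have h3 := (Submodule.mem_orthogonal _ _).1 hz a (Submodule.mem_span_singleton_self a)
    exact ⟨z, hz0, by rw [real_inner_comm]; exact h3⟩
  set E : Submodule ℝ (EuclideanSpace ℝ (Fin n)) := (ℝ ∙ z)ᗮ with hEdef
  have hE : Module.finrank ℝ E = n - 1 := by
    rw [hEdef]
    have h2 := Submodule.finrank_add_finrank_orthogonal (K := (ℝ ∙ z))
    rw [finrank_span_singleton hz0] at h2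
    simp only [finrank_euclideanSpace_fin] at h2
    omega
  have haE : a ∈ E := by
    rw [hEdef]
    intro u hu
    obtain ⟨t, rfl⟩ := Submodule.mem_span_singleton.1 hu
    rw [real_inner_smul_left, hza, mul_zero]
  set k : ℕ := n - 2 with hkdef
  have hk : n - 1 = k + 1 := by omega
  -- the direction ν
  set ν : ↥E := E.orthogonalProjectionOnto w with hνdef
  have hν : ∀ x : EuclideanSpace ℝ (Fin n), x ∈ E →
      ⟪(ν : EuclideanSpace ℝ (Fin n)), x⟫ = ⟪w, x⟫ := fun x hx => aux_proj_inner E w x hx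
  have hνa : ⟪(ν : EuclideanSpace ℝ (Fin n)), a⟫ = ⟪w, a⟫ := hν a haE
  set N : ℝ := ‖(ν : EuclideanSpace ℝ (Fin n))‖ with hNdef
  have hN : 0 < N := by
    rw [hNdef, norm_pos_iff]
    intro hν0
    rw [hν0] at hνa
    simp only [inner_zero_left] at hνa
    linarith
  -- unit vector and adapted orthonormal basis
  set u₀ : ↥E := N⁻¹ • ν with hu₀def
  have hu₀norm : ‖u₀‖ = 1 := by
    rw [hu₀def, norm_smul]
    have hνnorm : ‖ν‖ = N := rfl
    rw [hνnorm, norm_inv, Real.norm_eq_abs, abs_of_pos hN, inv_mul_cancel₀ (ne_of_gt hN)]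
  obtain ⟨b, hb0⟩ : ∃ b : OrthonormalBasis (Fin (k+1)) ℝ ↥E, b 0 = u₀ := by
    have card : Module.finrank ℝ ↥E = Fintype.card (Fin (k+1)) := by
      rw [hE, hk]; simp
    have horth : Orthonormal ℝ (Set.restrict {(0 : Fin (k+1))} (fun _ => u₀)) := by
      constructor
      · intro i; exact hu₀norm
      · intro i j hij
        exact absurd (Subsingleton.elim i j) hij
    obtain ⟨b, hb⟩ := horth.exists_orthonormalBasis_extension_of_card_eq card
    exact ⟨b, hb 0 rfl⟩
  set Ψ := PsiMap E b with hΨdef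
  have hΨmp : MeasurePreserving Ψ volume volume := PsiMap_mp E b
  -- first coordinate formula
  have hfst : ∀ x : ↥E, (Ψ x).1 = N⁻¹ * ⟪w, (x : EuclideanSpace ℝ (Fin n))⟫ := by
    intro x
    rw [hΨdef, PsiMap_fst, hb0, hu₀def]
    have h1 : ⟪N⁻¹ • ν, x⟫ = N⁻¹ * ⟪ν, x⟫ := real_inner_smul_left _ _ _
    rw [h1]
    congr 1
    have h2 : ⟪ν, x⟫ = ⟪(ν : EuclideanSpace ℝ (Fin n)), (x : EuclideanSpace ℝ (Fin n))⟫ :=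
      Submodule.coe_inner E ν x
    rw [h2, hν _ x.2]
  -- the subspace F and the map L
  set F : Submodule ℝ (EuclideanSpace ℝ (Fin n)) :=
    E ⊓ (ℝ ∙ (ν : EuclideanSpace ℝ (Fin n)))ᗮ with hFdef
  have hFE : F ≤ E := inf_le_left
  obtain ⟨p, hp⟩ := hK₃
  obtain ⟨ε', hε'0, hball'⟩ := Metric.isOpen_iff.1 isOpen_interior p hp
  set ε : ℝ := ε' / 2 with hεdef
  have hε0 : 0 < ε := by positivity
  have hball : Metric.closedBall p ε ⊆ K₀ := by
    intro x hx
    apply interior_subset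
    apply hball'
    rw [Metric.mem_ball]
    rw [Metric.mem_closedBall] at hx
    rw [hεdef] at hx
    linarith
  set L : EuclideanSpace ℝ (Fin n) →ₗ[ℝ] EuclideanSpace ℝ (Fin n) :=
    F.subtype.comp (F.orthogonalProjectionOnto).toLinearMap with hLdef
  have hLmem : ∀ x, L x ∈ F := fun x => (F.orthogonalProjectionOnto x).2
  have hLF : ∀ y : EuclideanSpace ℝ (Fin n), y ∈ F → L y = y := by
    intro y hy
    rw [hLdef]
    simp only [LinearMap.coe_comp, Function.comp_apply, ContinuousLinearMap.coe_coe,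
      Submodule.coe_subtype]
    exact Submodule.starProjection_eq_self_iff.2 hy
  set Q : Set (EuclideanSpace ℝ (Fin n)) := L '' K₀ with hQdef
  have hQF : Q ⊆ (F : Set (EuclideanSpace ℝ (Fin n))) := by
    rintro y ⟨x, hx, rfl⟩; exact hLmem x
  have hQE : Q ⊆ (E : Set (EuclideanSpace ℝ (Fin n))) := fun y hy => hFE (hQF hy)
  have hQcpt : IsCompact Q := hK₁.image (LinearMap.continuous_of_finiteDimensional L)
  have hQconv : Convex ℝ Q := hK₂.linear_image L
  have hQball : ∀ y : EuclideanSpace ℝ (Fin n), y ∈ F → ‖y - L p‖ ≤ ε → y ∈ Q := by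
    intro y hy hdist
    refine ⟨p + (y - L p), ?_, ?_⟩
    · apply hball
      rw [Metric.mem_closedBall, dist_eq_norm]
      simpa using hdist
    · have hyF : y - L p ∈ F := F.sub_mem hy (hLmem p)
      rw [map_add, hLF _ hyF]
      abel
  -- sets inside the subtype
  set A_E : Set ↥E := (↑) ⁻¹' A with hA_Edef
  set B_E : Set ↥E := (↑) ⁻¹' B with hB_Edef
  set Q_E : Set ↥E := (↑) ⁻¹' Q with hQ_Edef
  have hQ_Ecpt : IsCompact Q_E := aux_compact_preimage E Q hQcpt
  have hA_Ecpt : IsCompact A_E := aux_compact_preimage E A hA₁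
  have hB_Ecpt : IsCompact B_E := aux_compact_preimage E B hB₁
  -- vanishing of first coordinate on Q_E
  have hQ0 : ∀ q : ↥E, q ∈ Q_E → (Ψ q).1 = 0 := by
    intro q hq
    rw [hfst]
    have hqF : (q : EuclideanSpace ℝ (Fin n)) ∈ F := hQF hq
    have hqν : ⟪(ν : EuclideanSpace ℝ (Fin n)), (q : EuclideanSpace ℝ (Fin n))⟫ = 0 := by
      have h2 := hqF.2
      exact (Submodule.mem_orthogonal _ _).1 h2 _ (Submodule.mem_span_singleton_self _)
    rw [← hν _ q.2, hqν, mul_zero]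
  -- second-coordinate set
  set Q' : Set (Fin k → ℝ) := (fun x : ↥E => (Ψ x).2) '' Q_E with hQ'def
  have hsnd_add : ∀ x y : ↥E, (Ψ (x + y)).2 = (Ψ x).2 + (Ψ y).2 := by
    intro x y
    funext j
    rw [hΨdef]
    simp only [Pi.add_apply]
    rw [PsiMap_snd, PsiMap_snd, PsiMap_snd, inner_add_right]
  have hsnd_smul : ∀ (t : ℝ) (x : ↥E), (Ψ (t • x)).2 = t • (Ψ x).2 := by
    intro t x
    funext j
    rw [hΨdef]
    simp only [Pi.smul_apply, smul_eq_mul]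
    rw [PsiMap_snd, PsiMap_snd, real_inner_smul_right]
  have hfst_add : ∀ x y : ↥E, (Ψ (x + y)).1 = (Ψ x).1 + (Ψ y).1 := by
    intro x y
    rw [hΨdef, PsiMap_fst, PsiMap_fst, PsiMap_fst, inner_add_right]
  have hfst_smul : ∀ (t : ℝ) (x : ↥E), (Ψ (t • x)).1 = t * (Ψ x).1 := by
    intro t x
    rw [hΨdef, PsiMap_fst, PsiMap_fst, real_inner_smul_right]
  have hΨcont : Continuous (⇑Ψ) := by
    have heq : ⇑Ψ = fun x : ↥E => ((⟪b 0, x⟫ : ℝ), fun j : Fin k => (⟪b j.succ, x⟫ : ℝ)) := by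
      funext x
      exact Prod.ext (by rw [hΨdef]; exact PsiMap_fst E b x)
        (funext fun j => by rw [hΨdef]; exact PsiMap_snd E b x j)
    rw [heq]
    exact Continuous.prodMk (continuous_const.inner continuous_id)
      (continuous_pi fun j => continuous_const.inner continuous_id)
  have hQ'cpt : IsCompact Q' := hQ_Ecpt.image (continuous_snd.comp hΨcont)
  have hQ'conv : Convex ℝ Q' := by
    have hQ_Econv : Convex ℝ Q_E := by
      have := hQconv.linear_preimage E.subtype
      exact this
    intro x hx y hy s t hs ht hst
    obtain ⟨x', hx', rfl⟩ := hx
    obtain ⟨y', hy', rfl⟩ := hy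
    refine ⟨s • x' + t • y', hQ_Econv hx' hy' hs ht hst, ?_⟩
    show (Ψ (s • x' + t • y')).2 = s • (Ψ x').2 + t • (Ψ y').2
    rw [hsnd_add, hsnd_smul, hsnd_smul]
  -- base point of Q and recentered copy
  have hpK : p ∈ K₀ := hball (Metric.mem_closedBall_self hε0.le)
  set pE : ↥E := ⟨L p, hFE (hLmem p)⟩ with hpEdef
  have hpEQ : pE ∈ Q_E := by
    show (pE : EuclideanSpace ℝ (Fin n)) ∈ Q
    exact ⟨p, hpK, rfl⟩
  set e₀ : Fin k → ℝ := (Ψ pE).2 with he₀def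
  have he₀ : e₀ ∈ Q' := ⟨pE, hpEQ, rfl⟩
  set Q'₀ : Set (Fin k → ℝ) := (-e₀) +ᵥ Q' with hQ'₀def
  have hmemQ'₀ : ∀ v : Fin k → ℝ, v ∈ Q'₀ ↔ e₀ + v ∈ Q' := by
    intro v
    rw [hQ'₀def, Set.mem_vadd_set_iff_neg_vadd_mem, neg_neg]
    rfl
  have hQ'₀conv : Convex ℝ Q'₀ := by
    intro x hx y hy s t hs ht hst
    rw [hmemQ'₀] at hx hy ⊢
    have h2 := hQ'conv hx hy hs ht hst
    have h3 : s • (e₀ + x) + t • (e₀ + y) = (s + t) • e₀ + (s • x + t • y) := by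
      rw [smul_add, smul_add, add_smul]
      abel
    rw [h3, hst, one_smul] at h2
    exact h2
  have hvolQ'₀ : volume Q'₀ = volume Q' := by
    rw [hQ'₀def]
    exact measure_vadd _ _ _
  -- the quantities α, h₁, d
  set aE : ↥E := ⟨a, haE⟩ with haEdef
  have haAE : aE ∈ A_E := ha
  set α : ℝ := N⁻¹ * ⟪w, a⟫ with hαdef
  have hαfst : (Ψ aE).1 = α := hfst aE
  set d : Fin k → ℝ := (Ψ aE).2 with hddef
  set h₁ : ℝ := N⁻¹ * c with hh₁def
  have hh₁α : h₁ < α := by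
    rw [hh₁def, hαdef]
    exact mul_lt_mul_of_pos_left hwa (inv_pos.2 hN)
  have hh₁0 : 0 < h₁ := by
    rw [hh₁def]
    exact mul_pos (inv_pos.2 hN) hc0
  have hα0 : 0 < α := lt_trans hh₁0 hh₁α
  have hBfst : ∀ y : ↥E, y ∈ B_E → (Ψ y).1 ∈ Set.Icc (-h₁) h₁ := by
    intro y hy
    rw [hfst]
    have h2 := habs _ hy
    have h3 : |N⁻¹ * ⟪w, (y : EuclideanSpace ℝ (Fin n))⟫| ≤ N⁻¹ * c := by
      rw [abs_mul, abs_of_pos (inv_pos.2 hN)]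
      exact mul_le_mul_of_nonneg_left h2 (inv_pos.2 hN).le
    rw [abs_le] at h3
    exact ⟨h3.1, h3.2⟩
  -- bound on B
  obtain ⟨ρ₀, hρ₀⟩ := hB₁.isBounded.subset_closedBall 0
  set ρ : ℝ := max ρ₀ 1 with hρdef
  have hρ0 : 0 < ρ := lt_of_lt_of_le one_pos (le_max_right _ _)
  have hρB : ∀ y : EuclideanSpace ℝ (Fin n), y ∈ B → ‖y‖ ≤ ρ := by
    intro y hy
    have h2 := hρ₀ hy
    rw [Metric.mem_closedBall, dist_zero_right] at h2
    exact le_trans h2 (le_max_left _ _)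
  have hsnd_bound : ∀ y : ↥E, y ∈ B_E → ‖(Ψ y).2‖ ≤ ρ := by
    intro y hy
    rw [pi_norm_le_iff_of_nonneg hρ0.le]
    intro j
    rw [hΨdef, PsiMap_snd]
    have hb1 : ‖b j.succ‖ = 1 := b.orthonormal.1 j.succ
    have h2 : |⟪b j.succ, y⟫| ≤ ‖y‖ := by
      have h2' := abs_real_inner_le_norm (b j.succ) y
      rw [hb1, one_mul] at h2'
      exact h2'
    have h3 : ‖y‖ ≤ ρ := by
      have : ‖y‖ = ‖(y : EuclideanSpace ℝ (Fin n))‖ := rfl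
      rw [this]
      exact hρB _ hy
    calc ‖⟪b j.succ, y⟫‖ = |⟪b j.succ, y⟫| := rfl
      _ ≤ ‖y‖ := h2
      _ ≤ ρ := h3
  -- small ball inside recentered Q'
  set r : ℝ := ε / (Real.sqrt (k+1) + 1) with hrdef
  have hsqrt0 : (0:ℝ) ≤ Real.sqrt (k+1) := Real.sqrt_nonneg _
  have hr0 : 0 < r := div_pos hε0 (by linarith)
  have hνb0 : ν = N • b 0 := by
    rw [hb0, hu₀def, smul_smul, mul_inv_cancel₀ hN.ne', one_smul]
  have hballQ : Metric.closedBall (0 : Fin k → ℝ) r ⊆ Q'₀ := by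
    intro ζ hζ
    rw [mem_closedBall_zero_iff] at hζ
    set ξ : EuclideanSpace ℝ (Fin (k+1)) := WithLp.toLp 2 (Fin.cons 0 ζ : Fin (k+1) → ℝ) with hξdef
    set σ : ↥E := b.repr.symm ξ with hσdef
    have hrepr : b.repr σ = ξ := b.repr.apply_symm_apply ξ
    have hcoord : ∀ i, ⟪b i, σ⟫ = ξ i := by
      intro i
      rw [← OrthonormalBasis.repr_apply_apply, hrepr]
    have hξ0 : ξ 0 = 0 := rfl
    have hξsucc : ∀ j : Fin k, ξ j.succ = ζ j := fun j =>
      show (Fin.cons 0 ζ : Fin (k+1) → ℝ) j.succ = ζ j from Fin.cons_succ _ _ _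
    have hσnorm : ‖(σ : EuclideanSpace ℝ (Fin n))‖ ≤ ε := by
      have h2 : ‖(σ : EuclideanSpace ℝ (Fin n))‖ = ‖σ‖ := rfl
      rw [h2, hσdef, LinearIsometryEquiv.norm_map]
      have h3 : ‖ξ‖ ≤ Real.sqrt (k+1) * ‖ζ‖ := by
        rw [EuclideanSpace.norm_eq]
        have h4 : ∑ i, ‖ξ i‖^2 ≤ (k+1) * ‖ζ‖^2 := by
          have h5 : ∀ i, ‖ξ i‖^2 ≤ ‖ζ‖^2 := by
            intro i
            induction i using Fin.cases with
            | zero => simp [hξ0]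
            | succ j =>
              rw [hξsucc]
              have := norm_le_pi_norm ζ j
              have h6 : (0:ℝ) ≤ ‖ζ j‖ := norm_nonneg _
              nlinarith
          calc ∑ i, ‖ξ i‖^2 ≤ ∑ _i : Fin (k+1), ‖ζ‖^2 := Finset.sum_le_sum (fun i _ => h5 i)
            _ = (k+1) * ‖ζ‖^2 := by
              rw [Finset.sum_const, Finset.card_fin]
              push_cast
              ring
        calc Real.sqrt (∑ i, ‖ξ i‖^2) ≤ Real.sqrt ((k+1) * ‖ζ‖^2) := Real.sqrt_le_sqrt h4
          _ = Real.sqrt (k+1) * ‖ζ‖ := by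
            rw [Real.sqrt_mul (by positivity), Real.sqrt_sq (norm_nonneg _)]
      have h7 : Real.sqrt (k+1) * ‖ζ‖ ≤ Real.sqrt (k+1) * r :=
        mul_le_mul_of_nonneg_left hζ hsqrt0
      have h8 : Real.sqrt (k+1) * r ≤ ε := by
        rw [hrdef]
        rw [div_eq_iff (by linarith : Real.sqrt (k+1) + 1 ≠ 0)] at *
        have h9 : Real.sqrt (k+1) * (ε / (Real.sqrt (k+1) + 1)) ≤
            (Real.sqrt (k+1) + 1) * (ε / (Real.sqrt (k+1) + 1)) := by
          apply mul_le_mul_of_nonneg_right _ (le_of_lt hr0)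
          linarith
        calc Real.sqrt (k+1) * (ε / (Real.sqrt (k+1) + 1)) ≤
            (Real.sqrt (k+1) + 1) * (ε / (Real.sqrt (k+1) + 1)) := h9
          _ = ε := by field_simp
      linarith
    have hσF : (σ : EuclideanSpace ℝ (Fin n)) ∈ F := by
      rw [hFdef]
      refine Submodule.mem_inf.2 ⟨σ.2, ?_⟩
      intro u hu
      obtain ⟨s, rfl⟩ := Submodule.mem_span_singleton.1 hu
      rw [real_inner_smul_left]
      have h2 : ⟪(ν : EuclideanSpace ℝ (Fin n)), (σ : EuclideanSpace ℝ (Fin n))⟫ = ⟪ν, σ⟫ :=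
        (Submodule.coe_inner E ν σ).symm
      rw [h2, hνb0, real_inner_smul_left, hcoord 0, hξ0, mul_zero, mul_zero]
    set q : ↥E := pE + σ with hqdef
    have hqQ : q ∈ Q_E := by
      show (q : EuclideanSpace ℝ (Fin n)) ∈ Q
      have h2 : (q : EuclideanSpace ℝ (Fin n)) = L p + (σ : EuclideanSpace ℝ (Fin n)) := rfl
      rw [h2]
      apply hQball
      · exact F.add_mem (hLmem p) hσF
      · simpa using hσnorm
    rw [hmemQ'₀]
    refine ⟨q, hqQ, ?_⟩
    show (Ψ q).2 = e₀ + ζ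
    rw [hqdef, hsnd_add]
    congr 1
    funext j
    rw [hΨdef, PsiMap_snd, hcoord, hξsucc]
  set VQ : ℝ≥0∞ := volume Q' with hVQdef
  have hVQtop : VQ ≠ ⊤ := hQ'cpt.measure_lt_top.ne
  have hVQ0 : VQ ≠ 0 := by
    have h2 : 0 < volume (Metric.closedBall (0 : Fin k → ℝ) r) :=
      measure_closedBall_pos volume 0 hr0
    have h3 : volume (Metric.closedBall (0 : Fin k → ℝ) r) ≤ volume Q'₀ :=
      measure_mono hballQ
    rw [hvolQ'₀] at h3
    exact (lt_of_lt_of_le h2 h3).ne'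
  set c₀ : ℝ := ρ / r with hc₀def
  have hc₀0 : 0 < c₀ := div_pos hρ0 hr0
  -- the main inequality, for every t ≥ 1
  have key : ∀ t : ℝ, 1 ≤ t → α * t^k ≤ h₁ * (t+c₀)^k := by
    intro t ht
    have ht0 : 0 < t := lt_of_lt_of_le one_pos ht
    have htne : t ≠ 0 := ht0.ne'
    have hsec := h (t • L) E hE
    have himg : (⇑(t • L)) '' K₀ = t • Q := by
      ext v
      constructor
      · rintro ⟨x, hx, rfl⟩
        exact ⟨L x, ⟨x, hx, rfl⟩, by simp⟩
      · rintro ⟨y, ⟨x, hx, rfl⟩, rfl⟩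
        exact ⟨x, hx, by simp⟩
    have htQE : t • Q ⊆ (E : Set (EuclideanSpace ℝ (Fin n))) := by
      rintro v ⟨y, hy, rfl⟩
      exact E.smul_mem t (hQE hy)
    rw [himg, aux_preimage_add_split E A _ htQE, aux_preimage_add_split E B _ htQE,
      aux_preimage_smul_split E Q t htne] at hsec
    change volume (A_E + t • Q_E) ≤ volume (B_E + t • Q_E) at hsec
    have htQcpt : IsCompact (t • Q_E) := by
      have him : t • Q_E = (fun x : ↥E => t • x) '' Q_E := rfl
      rw [him]
      exact hQ_Ecpt.image (continuous_const_smul t)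
    have hXA : IsCompact (A_E + t • Q_E) := hA_Ecpt.add htQcpt
    have hXB : IsCompact (B_E + t • Q_E) := hB_Ecpt.add htQcpt
    have htransA : volume (⇑Ψ '' (A_E + t • Q_E)) = volume (A_E + t • Q_E) := by
      rw [MeasurableEquiv.image_eq_preimage_symm]
      exact (hΨmp.symm Ψ).measure_preimage
        hXA.isClosed.measurableSet.nullMeasurableSet
    have htransB : volume (⇑Ψ '' (B_E + t • Q_E)) = volume (B_E + t • Q_E) := by
      rw [MeasurableEquiv.image_eq_preimage_symm]
      exact (hΨmp.symm Ψ).measure_preimage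
        hXB.isClosed.measurableSet.nullMeasurableSet
    -- lower bound for the A-side
    have hTsub : {p : ℝ × (Fin k → ℝ) | p.1 ∈ Set.Icc (-α) α ∧ p.2 - (p.1/α) • d ∈ t • Q'}
        ⊆ ⇑Ψ '' (A_E + t • Q_E) := by
      rintro ⟨s, v⟩ ⟨hs, hv⟩
      rw [Set.mem_smul_set] at hv
      obtain ⟨y, hy, hyeq⟩ := hv
      obtain ⟨q, hq, hqeq⟩ := hy
      have hqeq' : (Ψ q).2 = y := hqeq
      have hmemA : (s/α) • aE ∈ A_E := by
        show ((s/α) • aE : ↥E).val ∈ A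
        have hco : ((s/α) • aE : ↥E).val = (s/α) • a := rfl
        rw [hco]
        apply aux_symm_scale A hA₂ hAsymm a ha
        rw [abs_div, abs_of_pos hα0, div_le_one hα0]
        rw [Set.mem_Icc] at hs
        rw [abs_le]
        exact hs
      refine ⟨(s/α) • aE + t • q, Set.add_mem_add hmemA (Set.smul_mem_smul_set hq), ?_⟩
      apply Prod.ext
      · show (Ψ ((s/α) • aE + t • q)).1 = s
        rw [hfst_add, hfst_smul, hfst_smul, hαfst, hQ0 q hq, mul_zero, add_zero,
          div_mul_cancel₀ s hα0.ne']
      · show (Ψ ((s/α) • aE + t • q)).2 = v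
        rw [hsnd_add, hsnd_smul, hsnd_smul, hqeq']
        have hyd : t • y = v - (s/α) • d := hyeq
        rw [hyd]
        abel
    have htQ'meas : MeasurableSet (t • Q') := by
      have him : t • Q' = (fun x : Fin k → ℝ => t • x) '' Q' := rfl
      rw [him]
      exact ((hQ'cpt.image (continuous_const_smul t)).isClosed).measurableSet
    have hlow : ENNReal.ofReal (2*α) * (ENNReal.ofReal (t^k) * VQ)
        ≤ volume (A_E + t • Q_E) := by
      have h2 := aux_vol_T_lower k α d (t • Q') htQ'meas
      rw [aux_vol_smul k Q' t ht0.le] at h2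
      calc ENNReal.ofReal (2*α) * (ENNReal.ofReal (t^k) * VQ)
          ≤ volume {p : ℝ × (Fin k → ℝ) |
              p.1 ∈ Set.Icc (-α) α ∧ p.2 - (p.1/α) • d ∈ t • Q'} := h2
        _ ≤ volume (⇑Ψ '' (A_E + t • Q_E)) := measure_mono hTsub
        _ = volume (A_E + t • Q_E) := htransA
    -- upper bound for the B-side
    have hupsub : ⇑Ψ '' (B_E + t • Q_E)
        ⊆ (Set.Icc (-h₁) h₁) ×ˢ ((t • e₀) +ᵥ ((t + c₀) • Q'₀)) := by
      rintro _ ⟨x, hx, rfl⟩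
      obtain ⟨y, hy, z, hz, rfl⟩ := hx
      rw [Set.mem_smul_set] at hz
      obtain ⟨q, hq, rfl⟩ := hz
      constructor
      · show (Ψ (y + t • q)).1 ∈ Set.Icc (-h₁) h₁
        rw [hfst_add, hfst_smul, hQ0 q hq, mul_zero, add_zero]
        exact hBfst y hy
      · show (Ψ (y + t • q)).2 ∈ (t • e₀) +ᵥ ((t + c₀) • Q'₀)
        rw [hsnd_add, hsnd_smul]
        have hv₁ : (Ψ q).2 - e₀ ∈ Q'₀ := by
          rw [hmemQ'₀]
          have h3 : e₀ + ((Ψ q).2 - e₀) = (Ψ q).2 := by abel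
          rw [h3]
          exact ⟨q, hq, rfl⟩
        have hw₁ : c₀⁻¹ • (Ψ y).2 ∈ Metric.closedBall (0 : Fin k → ℝ) r := by
          rw [mem_closedBall_zero_iff, norm_smul, norm_inv, Real.norm_eq_abs,
            abs_of_pos hc₀0]
          have h4 : c₀⁻¹ * ‖(Ψ y).2‖ ≤ c₀⁻¹ * ρ :=
            mul_le_mul_of_nonneg_left (hsnd_bound y hy) (inv_pos.2 hc₀0).le
          have h5 : c₀⁻¹ * ρ = r := by
            rw [hc₀def]
            field_simp
          linarith
        have hy₂ : (Ψ y).2 ∈ c₀ • Q'₀ := by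
          refine ⟨c₀⁻¹ • (Ψ y).2, hballQ hw₁, ?_⟩
          show c₀ • (c₀⁻¹ • (Ψ y).2) = (Ψ y).2
          rw [smul_smul, mul_inv_cancel₀ hc₀0.ne', one_smul]
        obtain ⟨w₁, hw₁Q, hw₁eq⟩ := hy₂
        rw [Set.mem_vadd_set_iff_neg_vadd_mem]
        have hsum : -(t • e₀) +ᵥ ((Ψ y).2 + t • (Ψ q).2)
            = t • ((Ψ q).2 - e₀) + c₀ • w₁ := by
          rw [← hw₁eq]
          show -(t • e₀) + ((c₀ • w₁) + t • (Ψ q).2) = t • ((Ψ q).2 - e₀) + c₀ • w₁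
          rw [smul_sub]
          abel
        rw [hsum]
        have hsplit : (t + c₀) • Q'₀ = t • Q'₀ + c₀ • Q'₀ :=
          hQ'₀conv.add_smul ht0.le hc₀0.le
        rw [hsplit]
        exact Set.add_mem_add (Set.smul_mem_smul_set hv₁) (Set.smul_mem_smul_set hw₁Q)
    have hup : volume (B_E + t • Q_E)
        ≤ ENNReal.ofReal (2*h₁) * (ENNReal.ofReal ((t+c₀)^k) * VQ) := by
      calc volume (B_E + t • Q_E) = volume (⇑Ψ '' (B_E + t • Q_E)) := htransB.symm
        _ ≤ volume ((Set.Icc (-h₁) h₁) ×ˢ ((t • e₀) +ᵥ ((t + c₀) • Q'₀))) :=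
            measure_mono hupsub
        _ = ENNReal.ofReal (2*h₁) * volume ((t • e₀) +ᵥ ((t + c₀) • Q'₀)) :=
            aux_vol_prod_upper k h₁ _
        _ = ENNReal.ofReal (2*h₁) * volume ((t + c₀) • Q'₀) := by
            rw [measure_vadd]
        _ = ENNReal.ofReal (2*h₁) * (ENNReal.ofReal ((t+c₀)^k) * volume Q'₀) := by
            rw [aux_vol_smul k Q'₀ (t+c₀) (by linarith)]
        _ = ENNReal.ofReal (2*h₁) * (ENNReal.ofReal ((t+c₀)^k) * VQ) := by
            rw [hvolQ'₀]
    have hchain : ENNReal.ofReal (2*α) * ENNReal.ofReal (t^k) * VQ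
        ≤ ENNReal.ofReal (2*h₁) * ENNReal.ofReal ((t+c₀)^k) * VQ := by
      rw [mul_assoc, mul_assoc]
      exact le_trans hlow (le_trans hsec hup)
    rw [ENNReal.mul_le_mul_iff_left hVQ0 hVQtop] at hchain
    rw [← ENNReal.ofReal_mul (by linarith : (0:ℝ) ≤ 2*α),
      ← ENNReal.ofReal_mul (by linarith : (0:ℝ) ≤ 2*h₁)] at hchain
    rw [ENNReal.ofReal_le_ofReal_iff (by positivity)] at hchain
    nlinarith [hchain]
  have hcontra := aux_limit_contra k α h₁ c₀ key
  linarith
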